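/- The targeted functional characterizes additivity: E[ (E[ δψ(Z)/G(Z) − m_add(X) | X ])^2 ] = E[ (m_ψ(X) − m_add(X))^2 ], which equals 0 if and only if m_ψ(X) = m_add(X) almost surely. -/

import Mathlib

open MeasureTheory ProbabilityTheory Filter
open scoped BigOperators Topology ENNReal

/-- The targeted functional characterizes additivity:
`E[(E[δψ(Z)/G(Z) − m_add(X) | X])²] = E[(m_ψ(X) − m_add(X))²]`, and this
quantity vanishes iff `m_ψ(X) = m_add(X)` a.s. -/
theorem stmt8 {Ω : Type*} [MeasureSpace Ω] [IsProbabilityMeasure (ℙ : Measure Ω)]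
    {d : ℕ} (X : Ω → (Fin d → ℝ)) (Y C : Ω → ℝ) (ψ : ℝ → ℝ) (τ₀ : ℝ) (M : ℝ)
    (hX : Measurable X) (hY : Measurable Y) (hC : Measurable C)
    (hψ : Measurable ψ) (hψbd : ∀ t, |ψ t| ≤ M) (hψ0 : ∀ t, τ₀ < t → ψ t = 0)
    (hindep : IndepFun C (fun ω => (X ω, Y ω)) ℙ)
    (G : ℝ → ℝ) (hG : ∀ t, G t = (ℙ {ω | t < C ω}).toReal)
    (hGcont : Continuous G) (hGτ₀ : 0 < G τ₀)
    (mψ : (Fin d → ℝ) → ℝ) (hmψ : Measurable mψ)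
    (hreg : (fun ω => mψ (X ω)) =ᵐ[ℙ]
      ℙ[fun ω => ψ (Y ω) | MeasurableSpace.comap X inferInstance])
    (madd : (Fin d → ℝ) → ℝ) (hmadd : Measurable madd)
    (hL2 : Integrable (fun ω => (madd (X ω))^2) ℙ) :
    (∫ ω, ((ℙ[(fun ω' => (if Y ω' ≤ C ω' then (1:ℝ) else 0) *
          ψ (min (Y ω') (C ω')) / G (min (Y ω') (C ω')) - madd (X ω')
          ) | MeasurableSpace.comap X inferInstance]) ω)^2 ∂ℙ
        = ∫ ω, (mψ (X ω) - madd (X ω))^2 ∂ℙ) ∧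
    ((∫ ω, (mψ (X ω) - madd (X ω))^2 ∂ℙ = 0) ↔
      (fun ω => mψ (X ω)) =ᵐ[ℙ] (fun ω => madd (X ω))) := by
  classical
  have hm : MeasurableSpace.comap X inferInstance
      ≤ (MeasureSpace.toMeasurableSpace : MeasurableSpace Ω) := hX.comap_le
  haveI : SigmaFinite (@Measure.trim Ω (MeasurableSpace.comap X inferInstance)
      MeasureSpace.toMeasurableSpace ℙ hm) := by
    infer_instance
  have hM0 : 0 ≤ M := le_trans (abs_nonneg _) (hψbd 0)
  have hGmeas : Measurable G := hGcont.measurable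
  -- G is antitone
  have hGanti : Antitone G := by
    intro s t hst
    rw [hG t, hG s]
    refine ENNReal.toReal_mono (measure_ne_top _ _) (measure_mono ?_)
    intro ω hω
    exact lt_of_le_of_lt hst hω
  have hGpos : ∀ y, y ≤ τ₀ → 0 < G y := fun y hy => lt_of_lt_of_le hGτ₀ (hGanti hy)
  have hψG_bd : ∀ y, |ψ y / G y| ≤ M / G τ₀ := by
    intro y
    by_cases hy : τ₀ < y
    · simp [hψ0 y hy, div_nonneg hM0 hGτ₀.le]
    · push_neg at hy
      have hGy := hGpos y hy
      rw [abs_div, abs_of_pos hGy]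
      exact div_le_div₀ hM0 (hψbd y) hGτ₀ (hGanti hy)
  -- measure of {y ≤ C}
  have hIci : ∀ y : ℝ, (ℙ {ω | y ≤ C ω}).toReal = G y := by
    intro y
    have hsub : ∀ n : ℕ, MeasurableSet {ω | y - 1/((n:ℝ)+1) < C ω} := fun n =>
      measurableSet_lt measurable_const hC
    have hanti : Antitone (fun n : ℕ => {ω | y - 1/((n:ℝ)+1) < C ω}) := by
      intro a b hab ω hω
      simp only [Set.mem_setOf_eq] at *
      have h1 : 1/((b:ℝ)+1) ≤ 1/((a:ℝ)+1) := by
        apply one_div_le_one_div_of_le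
        · positivity
        · exact_mod_cast Nat.add_le_add_right hab 1
      linarith
    have hiInter : (⋂ n : ℕ, {ω | y - 1/((n:ℝ)+1) < C ω}) = {ω | y ≤ C ω} := by
      ext ω
      simp only [Set.mem_iInter, Set.mem_setOf_eq]
      constructor
      · intro h
        by_contra hlt
        push_neg at hlt
        obtain ⟨n, hn⟩ := exists_nat_one_div_lt (sub_pos.mpr hlt)
        have := h n
        linarith
      · intro h n
        have : (0:ℝ) < 1/((n:ℝ)+1) := by positivity
        linarith
    have h1 : Tendsto (fun n : ℕ => ℙ {ω | y - 1/((n:ℝ)+1) < C ω}) atTop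
        (𝓝 (ℙ {ω | y ≤ C ω})) := by
      have := tendsto_measure_iInter_atTop (μ := (ℙ : Measure Ω))
        (fun n => (hsub n).nullMeasurableSet) hanti ⟨0, measure_ne_top _ _⟩
      rwa [hiInter] at this
    have h2 : Tendsto (fun n : ℕ => (ℙ {ω | y - 1/((n:ℝ)+1) < C ω}).toReal) atTop
        (𝓝 ((ℙ {ω | y ≤ C ω}).toReal)) :=
      (ENNReal.tendsto_toReal (measure_ne_top _ _)).comp h1
    have h3 : Tendsto (fun n : ℕ => G (y - 1/((n:ℝ)+1))) atTop (𝓝 (G y)) := by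
      have harg : Tendsto (fun n : ℕ => y - 1/((n:ℝ)+1)) atTop (𝓝 (y - 0)) :=
        tendsto_const_nhds.sub tendsto_one_div_add_atTop_nhds_zero_nat
      rw [sub_zero] at harg
      exact (hGcont.tendsto y).comp harg
    have h4 : (fun n : ℕ => (ℙ {ω | y - 1/((n:ℝ)+1) < C ω}).toReal)
        = fun n : ℕ => G (y - 1/((n:ℝ)+1)) := by
      funext n
      rw [hG]
    rw [h4] at h2
    exact tendsto_nhds_unique h2 h3
  -- push forward measures
  set μC := Measure.map C ℙ with hμC_def
  set μXY := Measure.map (fun ω => (X ω, Y ω)) ℙ with hμXY_def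
  haveI : IsProbabilityMeasure μC := Measure.isProbabilityMeasure_map hC.aemeasurable
  haveI : IsProbabilityMeasure μXY :=
    Measure.isProbabilityMeasure_map (hX.prodMk hY).aemeasurable
  have hμCIci : ∀ y : ℝ, (μC (Set.Ici y)).toReal = G y := by
    intro y
    rw [hμC_def, Measure.map_apply hC measurableSet_Ici]
    exact hIci y
  have hinner : ∀ y : ℝ, ∫ c, (if y ≤ c then (1:ℝ) else 0) ∂μC = G y := by
    intro y
    have hswap : (fun c => if y ≤ c then (1:ℝ) else 0)
        = Set.indicator (Set.Ici y) (fun _ => (1:ℝ)) := by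
      funext c
      simp [Set.indicator_apply, Set.mem_Ici]
    rw [hswap, integral_indicator measurableSet_Ici]
    simp [hμCIci y]
    exact hμCIci y
  have hmap : Measure.map (fun ω => (C ω, (X ω, Y ω))) ℙ = μC.prod μXY :=
    (indepFun_iff_map_prod_eq_prod_map_map hC.aemeasurable
      (hX.prodMk hY).aemeasurable).mp hindep
  -- the uncensored-form integrand
  set f₁ : Ω → ℝ := fun ω => (if Y ω ≤ C ω then (1:ℝ) else 0) * (ψ (Y ω) / G (Y ω))
    with hf₁_def
  have hf₁meas : Measurable f₁ := by
    apply Measurable.mul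
    · exact Measurable.ite (measurableSet_le hY hC) measurable_const measurable_const
    · exact (hψ.comp hY).div (hGmeas.comp hY)
  have hf₁bd : ∀ ω, |f₁ ω| ≤ M / G τ₀ := by
    intro ω
    rw [hf₁_def]
    simp only
    rw [abs_mul]
    have h1 : |if Y ω ≤ C ω then (1:ℝ) else 0| ≤ 1 := by
      split_ifs <;> simp
    calc |if Y ω ≤ C ω then (1:ℝ) else 0| * |ψ (Y ω) / G (Y ω)|
        ≤ 1 * (M / G τ₀) :=
          mul_le_mul h1 (hψG_bd (Y ω)) (abs_nonneg _) zero_le_one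
      _ = M / G τ₀ := one_mul _
  have hf₁int : Integrable f₁ ℙ :=
    Integrable.mono' (integrable_const (M / G τ₀)) hf₁meas.aestronglyMeasurable
      (Filter.Eventually.of_forall hf₁bd)
  have hψYint : Integrable (fun ω => ψ (Y ω)) ℙ :=
    Integrable.mono' (integrable_const M) (hψ.comp hY).aestronglyMeasurable
      (Filter.Eventually.of_forall fun ω => hψbd (Y ω))
  have hmaddXmem : MemLp (fun ω => madd (X ω)) 2 ℙ :=
    (memLp_two_iff_integrable_sq (hmadd.comp hX).aestronglyMeasurable).mpr hL2
  have hmaddXint : Integrable (fun ω => madd (X ω)) ℙ := hmaddXmem.integrable one_le_two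
  -- key set-integral identity
  have key : ∀ A : Set (Fin d → ℝ), MeasurableSet A →
      ∫ ω in X ⁻¹' A, f₁ ω ∂ℙ = ∫ ω in X ⁻¹' A, ψ (Y ω) ∂ℙ := by
    intro A hA
    set HA : ℝ × ((Fin d → ℝ) × ℝ) → ℝ := fun q =>
      Set.indicator A (fun _ => (1:ℝ)) q.2.1 *
        ((if q.2.2 ≤ q.1 then (1:ℝ) else 0) * (ψ q.2.2 / G q.2.2)) with hHA_def
    have hHAmeas : Measurable HA := by
      apply Measurable.mul
      · exact (measurable_const.indicator hA).comp (measurable_fst.comp measurable_snd)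
      · apply Measurable.mul
        · exact Measurable.ite
            (measurableSet_le (measurable_snd.comp measurable_snd) measurable_fst)
            measurable_const measurable_const
        · exact ((hψ.comp (measurable_snd.comp measurable_snd)).div
            (hGmeas.comp (measurable_snd.comp measurable_snd)))
    have hHAbd : ∀ q, |HA q| ≤ M / G τ₀ := by
      intro q
      rw [hHA_def]
      simp only
      rw [abs_mul, abs_mul]
      have h1 : |Set.indicator A (fun _ => (1:ℝ)) q.2.1| ≤ 1 := by
        rw [Set.indicator_apply]
        split_ifs <;> simp
      have h2 : |if q.2.2 ≤ q.1 then (1:ℝ) else 0| ≤ 1 := by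
        split_ifs <;> simp
      have h3 := hψG_bd q.2.2
      have hBnn : 0 ≤ M / G τ₀ := div_nonneg hM0 hGτ₀.le
      calc |Set.indicator A (fun _ => (1:ℝ)) q.2.1| *
            (|if q.2.2 ≤ q.1 then (1:ℝ) else 0| * |ψ q.2.2 / G q.2.2|)
          ≤ 1 * (1 * (M / G τ₀)) := by
            apply mul_le_mul h1 _ (by positivity) zero_le_one
            exact mul_le_mul h2 h3 (abs_nonneg _) zero_le_one
        _ = M / G τ₀ := by ring
    have hHAint : Integrable HA (μC.prod μXY) :=
      Integrable.mono' (integrable_const (M / G τ₀)) hHAmeas.aestronglyMeasurable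
        (Filter.Eventually.of_forall hHAbd)
    have hcomp : ∀ ω, Set.indicator (X ⁻¹' A) f₁ ω = HA (C ω, (X ω, Y ω)) := by
      intro ω
      rw [hHA_def]
      simp only
      by_cases h : X ω ∈ A
      · have h' : ω ∈ X ⁻¹' A := h
        rw [Set.indicator_of_mem h', Set.indicator_of_mem h, one_mul]
      · have h' : ω ∉ X ⁻¹' A := h
        rw [Set.indicator_of_notMem h', Set.indicator_of_notMem h, zero_mul]
    have hpair : AEMeasurable (fun ω => (C ω, (X ω, Y ω))) ℙ :=
      (hC.prodMk (hX.prodMk hY)).aemeasurable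
    have step1 : ∫ ω in X ⁻¹' A, f₁ ω ∂ℙ = ∫ ω, Set.indicator (X ⁻¹' A) f₁ ω ∂ℙ :=
      (integral_indicator (hX hA)).symm
    have step2 : ∫ ω, Set.indicator (X ⁻¹' A) f₁ ω ∂ℙ
        = ∫ ω, HA (C ω, (X ω, Y ω)) ∂ℙ := by
      exact integral_congr_ae (Filter.Eventually.of_forall hcomp)
    have step3 : ∫ ω, HA (C ω, (X ω, Y ω)) ∂ℙ = ∫ q, HA q ∂(μC.prod μXY) := by
      rw [← hmap]
      exact (integral_map hpair hHAmeas.aestronglyMeasurable).symm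
    have step4 : ∫ q, HA q ∂(μC.prod μXY)
        = ∫ p, ∫ c, HA (c, p) ∂μC ∂μXY := integral_prod_symm HA hHAint
    have step5 : ∀ p : (Fin d → ℝ) × ℝ,
        ∫ c, HA (c, p) ∂μC = Set.indicator A (fun _ => (1:ℝ)) p.1 * ψ p.2 := by
      intro p
      have hrw : (fun c => HA (c, p))
          = fun c => (Set.indicator A (fun _ => (1:ℝ)) p.1 * (ψ p.2 / G p.2)) *
              (if p.2 ≤ c then (1:ℝ) else 0) := by
        funext c
        rw [hHA_def]
        ring
      rw [hrw, integral_const_mul, hinner p.2]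
      by_cases hψp : ψ p.2 = 0
      · simp [hψp]
      · have hp2 : p.2 ≤ τ₀ := by
          by_contra hgt
          push_neg at hgt
          exact hψp (hψ0 p.2 hgt)
        have hGp : G p.2 ≠ 0 := (hGpos p.2 hp2).ne'
        rw [mul_assoc, div_mul_cancel₀ _ hGp]
    have step6 : ∫ p, Set.indicator A (fun _ => (1:ℝ)) p.1 * ψ p.2 ∂μXY
        = ∫ ω, Set.indicator A (fun _ => (1:ℝ)) (X ω) * ψ (Y ω) ∂ℙ := by
      rw [hμXY_def]
      exact integral_map (hX.prodMk hY).aemeasurable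
        (((measurable_const.indicator hA).comp measurable_fst).mul
          (hψ.comp measurable_snd)).aestronglyMeasurable
    have step7 : ∫ ω, Set.indicator A (fun _ => (1:ℝ)) (X ω) * ψ (Y ω) ∂ℙ
        = ∫ ω in X ⁻¹' A, ψ (Y ω) ∂ℙ := by
      rw [← integral_indicator (hX hA)]
      apply integral_congr_ae
      apply Filter.Eventually.of_forall
      intro ω
      simp [Set.indicator_apply, Set.mem_preimage, ite_mul]
    rw [step1, step2, step3, step4]
    rw [integral_congr_ae (Filter.Eventually.of_forall step5), step6, step7]
  -- X is m-measurable
  have hXm : Measurable[MeasurableSpace.comap X inferInstance] X :=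
    Measurable.of_comap_le le_rfl
  have hmψXint : Integrable (fun ω => mψ (X ω)) ℙ := integrable_condExp.congr hreg.symm
  -- conditional expectation identity
  have hcond : (fun ω => mψ (X ω)) =ᵐ[ℙ] ℙ[f₁ | MeasurableSpace.comap X inferInstance] := by
    refine ae_eq_condExp_of_forall_setIntegral_eq hm hf₁int
      (fun s _ _ => hmψXint.integrableOn) ?_ ?_
    · intro s hs _
      obtain ⟨A, hA, rfl⟩ := hs
      have h1 : ∫ ω in X ⁻¹' A, mψ (X ω) ∂ℙ
          = ∫ ω in X ⁻¹' A, (ℙ[fun ω => ψ (Y ω) | MeasurableSpace.comap X inferInstance]) ω ∂ℙ :=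
        integral_congr_ae (ae_restrict_of_ae hreg)
      have h2 : ∫ ω in X ⁻¹' A, (ℙ[fun ω => ψ (Y ω) | MeasurableSpace.comap X inferInstance]) ω ∂ℙ
          = ∫ ω in X ⁻¹' A, ψ (Y ω) ∂ℙ :=
        setIntegral_condExp hm hψYint ⟨A, hA, rfl⟩
      rw [h1, h2, key A hA]
    · exact StronglyMeasurable.aestronglyMeasurable
        (Measurable.stronglyMeasurable (hmψ.comp hXm))
  -- replace min by Y inside the targeted functional
  have hFeq : (fun ω' => (if Y ω' ≤ C ω' then (1:ℝ) else 0) *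
        ψ (min (Y ω') (C ω')) / G (min (Y ω') (C ω')) - madd (X ω'))
      = fun ω' => f₁ ω' - madd (X ω') := by
    funext ω
    rw [hf₁_def]
    by_cases h : Y ω ≤ C ω
    · simp only [h, if_true, min_eq_left h, one_mul, mul_div_assoc]
    · simp only [h, if_false, zero_mul, zero_div, zero_sub]
  have hsub : ℙ[(fun ω' => f₁ ω' - madd (X ω')) | MeasurableSpace.comap X inferInstance]
      =ᵐ[ℙ] ℙ[f₁ | MeasurableSpace.comap X inferInstance]
        - ℙ[(fun ω => madd (X ω)) | MeasurableSpace.comap X inferInstance] :=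
    condExp_sub hf₁int hmaddXint _
  have hgcond : ℙ[(fun ω => madd (X ω)) | MeasurableSpace.comap X inferInstance]
      = fun ω => madd (X ω) :=
    condExp_of_stronglyMeasurable hm
      (Measurable.stronglyMeasurable (hmadd.comp hXm)) hmaddXint
  have hfinal : ℙ[(fun ω' => f₁ ω' - madd (X ω')) | MeasurableSpace.comap X inferInstance]
      =ᵐ[ℙ] fun ω => mψ (X ω) - madd (X ω) := by
    filter_upwards [hsub, hcond] with ω h1 h2
    rw [h1, Pi.sub_apply, hgcond, ← h2]
  -- second-conjunct integrability facts
  have hmψmem : MemLp (fun ω => mψ (X ω)) 2 ℙ := by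
    have hbd : ∀ᵐ ω ∂(ℙ : Measure Ω), |ψ (Y ω)| ≤ (M.toNNReal : ℝ) :=
      Filter.Eventually.of_forall fun ω => by
        rw [Real.coe_toNNReal M hM0]; exact hψbd (Y ω)
    have hbd2 := ae_bdd_condExp_of_ae_bdd (m := MeasurableSpace.comap X inferInstance) hbd
    have hbd3 : ∀ᵐ ω ∂(ℙ : Measure Ω), ‖mψ (X ω)‖ ≤ M := by
      filter_upwards [hreg, hbd2] with ω h1 h2
      · rw [Real.norm_eq_abs, h1]
        rwa [Real.coe_toNNReal M hM0] at h2
    exact MemLp.of_bound (hmψ.comp hX).aestronglyMeasurable M hbd3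
  have hdiffmem : MemLp (fun ω => mψ (X ω) - madd (X ω)) 2 ℙ := hmψmem.sub hmaddXmem
  have hsqint : Integrable (fun ω => (mψ (X ω) - madd (X ω))^2) ℙ :=
    (memLp_two_iff_integrable_sq hdiffmem.aestronglyMeasurable).mp hdiffmem
  constructor
  · rw [hFeq]
    apply integral_congr_ae
    filter_upwards [hfinal] with ω h
    rw [h]
  · constructor
    · intro h0
      have hz := (integral_eq_zero_iff_of_nonneg (fun ω => sq_nonneg _) hsqint).mp h0
      filter_upwards [hz] with ω hω
      have h1 : (mψ (X ω) - madd (X ω))^2 = 0 := hω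
      have h2 : mψ (X ω) - madd (X ω) = 0 := by
        exact pow_eq_zero_iff (two_ne_zero) |>.mp h1
      exact sub_eq_zero.mp h2
    · intro h
      have hz : (fun ω => (mψ (X ω) - madd (X ω))^2) =ᵐ[ℙ] (fun _ => (0:ℝ)) := by
        filter_upwards [h] with ω hω
        simp [hω]
      rw [integral_congr_ae hz, integral_zero]
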